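/- Let M and K be symmetric positive definite real n×n matrices (M the mass matrix, K the stiffness matrix) and let α, β, κ > 0 be real parameters. Set A := β M, B := κ K and C := α^{-1} M. Then the first block of the interpolation preconditioner at θ = 1/2 has the explicit form A + [A, Bᵀ C^{-1} B]_{1/2} = β M + (α β)^{1/2} κ K. -/

import Mathlib

open Matrix

/-- Real power of a real square matrix, via the continuous functional calculus
(spectral decomposition); junk value if the matrix is not selfadjoint. -/
noncomputable def mrpow {n : ℕ} (S : Matrix (Fin n) (Fin n) ℝ) (r : ℝ) :
    Matrix (Fin n) (Fin n) ℝ :=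
  cfc (fun x : ℝ => x ^ r) S

/-- The square root `M^{1/2}`. -/
noncomputable def msqrt {n : ℕ} (S : Matrix (Fin n) (Fin n) ℝ) : Matrix (Fin n) (Fin n) ℝ :=
  mrpow S (1 / 2)

section helpers
variable {n : ℕ}

lemma posDef_smul {S : Matrix (Fin n) (Fin n) ℝ} (hS : S.PosDef) {c : ℝ} (hc : 0 < c) :
    (c • S).PosDef := by
  refine ⟨by rw [IsHermitian, conjTranspose_smul, hS.1.eq]; simp, fun x hx => ?_⟩
  exact (hS.smul hc).2 hx

lemma posDef_conj {A Y : Matrix (Fin n) (Fin n) ℝ} (hA : A.PosDef) (hY : IsUnit Y) :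
    (Yᴴ * A * Y).PosDef := by
  exact hA.conjTranspose_mul_mul_same (mulVec_injective_of_isUnit hY)

lemma spectrum_pos {S : Matrix (Fin n) (Fin n) ℝ} (hS : S.PosDef) :
    ∀ x ∈ spectrum ℝ S, 0 < x := by
  intro x hx
  rw [hS.1.spectrum_real_eq_range_eigenvalues] at hx
  obtain ⟨i, rfl⟩ := hx
  exact hS.eigenvalues_pos i

lemma msqrt_eq_cfc_sqrt {S : Matrix (Fin n) (Fin n) ℝ} :
    msqrt S = cfc Real.sqrt S := by
  rw [msqrt, mrpow]
  exact cfc_congr fun x _ => (Real.sqrt_eq_rpow x).symm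

lemma msqrt_mul_self {S : Matrix (Fin n) (Fin n) ℝ} (hS : S.PosDef) :
    msqrt S * msqrt S = S := by
  have ha : IsSelfAdjoint S := hS.1
  rw [msqrt_eq_cfc_sqrt, ← cfc_mul _ _ S]
  have : cfc (fun x : ℝ => Real.sqrt x * Real.sqrt x) S = cfc (fun x : ℝ => x) S :=
    cfc_congr fun x hx => Real.mul_self_sqrt (spectrum_pos hS x hx).le
  rw [this, cfc_id' ℝ S]

lemma msqrt_posDef {S : Matrix (Fin n) (Fin n) ℝ} (hS : S.PosDef) :
    (msqrt S).PosDef := by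
  have ha : S.IsHermitian := hS.1
  rw [msqrt_eq_cfc_sqrt, ha.cfc_eq]
  unfold Matrix.IsHermitian.cfc
  have hU : IsUnit (star (ha.eigenvectorUnitary : Matrix (Fin n) (Fin n) ℝ)) := by
    exact ⟨⟨star (ha.eigenvectorUnitary : Matrix (Fin n) (Fin n) ℝ),
      (ha.eigenvectorUnitary : Matrix (Fin n) (Fin n) ℝ),
      Unitary.star_mul_self_of_mem ha.eigenvectorUnitary.2,
      Unitary.mul_star_self_of_mem ha.eigenvectorUnitary.2⟩, rfl⟩
  have key : (ha.eigenvectorUnitary : Matrix (Fin n) (Fin n) ℝ) *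
      diagonal (RCLike.ofReal ∘ Real.sqrt ∘ ha.eigenvalues) *
      star (ha.eigenvectorUnitary : Matrix (Fin n) (Fin n) ℝ)
      = (star (ha.eigenvectorUnitary : Matrix (Fin n) (Fin n) ℝ))ᴴ *
        diagonal (RCLike.ofReal ∘ Real.sqrt ∘ ha.eigenvalues) *
        star (ha.eigenvectorUnitary : Matrix (Fin n) (Fin n) ℝ) := by
    rw [← star_eq_conjTranspose, star_star]
  rw [Unitary.conjStarAlgAut_apply, key]
  refine posDef_conj (Matrix.PosDef.diagonal fun i => ?_) hU
  exact Real.sqrt_pos.mpr (hS.eigenvalues_pos i)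

open scoped MatrixOrder in
lemma msqrt_eq {S T : Matrix (Fin n) (Fin n) ℝ} (hS : S.PosDef) (hT : T.PosSemidef)
    (h : T * T = S) : msqrt S = T :=
  (CFC.sq_eq_sq_iff _ _ (msqrt_posDef hS).posSemidef.nonneg hT.nonneg).mp
    (by rw [pow_two, pow_two, msqrt_mul_self hS, h])

end helpers

/-- The interpolation `[V, W]_θ := V^{1/2} (V^{-1/2} W V^{-1/2})^θ V^{1/2}`,
where `V^{-1/2}` is the inverse of `V^{1/2}`. -/
noncomputable def interp {n : ℕ} (V W : Matrix (Fin n) (Fin n) ℝ) (θ : ℝ) :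
    Matrix (Fin n) (Fin n) ℝ :=
  msqrt V * mrpow ((msqrt V)⁻¹ * W * (msqrt V)⁻¹) θ * msqrt V

/-- With `A = β M`, `B = κ K`, `C = α⁻¹ M` (for `M`, `K` symmetric positive definite and
`α, β, κ > 0`), the first block of the interpolation preconditioner at `θ = 1/2` is
`A + [A, Bᵀ C⁻¹ B]_{1/2} = β M + (α β)^{1/2} κ K`. -/
theorem first_preconditioner_block {n : ℕ} (M K : Matrix (Fin n) (Fin n) ℝ)
    (hM : M.PosDef) (hK : K.PosDef) (α β κ : ℝ) (hα : 0 < α) (hβ : 0 < β) (hκ : 0 < κ)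
    (A B C : Matrix (Fin n) (Fin n) ℝ)
    (hA : A = β • M) (hB : B = κ • K) (hC : C = α⁻¹ • M) :
    A + interp A (Bᵀ * C⁻¹ * B) (1 / 2) =
      β • M + ((α * β) ^ ((1 : ℝ) / 2) * κ) • K := by
  subst hA hB hC
  have hMdet : IsUnit M.det := (Matrix.isUnit_iff_isUnit_det M).mp hM.isUnit
  set S := msqrt M with hSdef
  have hSpd : S.PosDef := msqrt_posDef hM
  have hSS : S * S = M := msqrt_mul_self hM
  have hSdet : IsUnit S.det := (Matrix.isUnit_iff_isUnit_det S).mp hSpd.isUnit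
  have hMinv : M⁻¹ = S⁻¹ * S⁻¹ := by rw [← hSS, Matrix.mul_inv_rev]
  have hKt : Kᵀ = K := by rw [← Matrix.conjTranspose_eq_transpose_of_trivial, hK.1]
  set a : ℝ := β ^ ((1:ℝ)/2) with hadef
  have ha2 : a * a = β := by
    rw [hadef, ← Real.rpow_add hβ]; norm_num
  have hapos : 0 < a := Real.rpow_pos_of_pos hβ _
  have hApd : (β • M).PosDef := posDef_smul hM hβ
  have hsqA : msqrt (β • M) = a • S := by
    refine msqrt_eq hApd (posDef_smul hSpd hapos).posSemidef ?_
    rw [smul_mul_smul_comm, ha2, hSS]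
  have hinvS : S * S⁻¹ = 1 := Matrix.mul_nonsing_inv S hSdet
  have hinvS' : S⁻¹ * S = 1 := Matrix.nonsing_inv_mul S hSdet
  have hinvA : (msqrt (β • M))⁻¹ = a⁻¹ • S⁻¹ := by
    rw [hsqA]
    apply Matrix.inv_eq_right_inv
    rw [smul_mul_smul_comm, hinvS, mul_inv_cancel₀ hapos.ne', one_smul]
  have hCinv : (α⁻¹ • M)⁻¹ = α • M⁻¹ := by
    apply Matrix.inv_eq_right_inv
    rw [smul_mul_smul_comm, Matrix.mul_nonsing_inv M hMdet, inv_mul_cancel₀ hα.ne', one_smul]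
  set c : ℝ := (α * β) ^ ((1:ℝ)/2) with hcdef
  have hc2 : c * c = α * β := by rw [hcdef, ← Real.rpow_add (mul_pos hα hβ)]; norm_num
  have hcpos : 0 < c := Real.rpow_pos_of_pos (mul_pos hα hβ) _
  set t : ℝ := c * κ * β⁻¹ with htdef
  have htpos : 0 < t := by positivity
  set P : Matrix (Fin n) (Fin n) ℝ := S⁻¹ * K * S⁻¹ with hPdef
  have hPpd : P.PosDef := by
    have h1 : P = (S⁻¹)ᴴ * K * S⁻¹ := by rw [hPdef, hSpd.inv.1.eq]
    rw [h1]
    exact posDef_conj hK hSpd.inv.isUnit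
  have hinner : (msqrt (β • M))⁻¹ * ((κ • K)ᵀ * (α⁻¹ • M)⁻¹ * (κ • K)) * (msqrt (β • M))⁻¹
      = (t * t) • (P * P) := by
    rw [hinvA, hCinv, transpose_smul, hKt, hMinv, hPdef]
    simp only [Matrix.smul_mul, Matrix.mul_smul, smul_smul, Matrix.mul_assoc]
    congr 1
    have hb : β ≠ 0 := hβ.ne'
    have hane : a ≠ 0 := hapos.ne'
    rw [htdef]
    rw [show (β:ℝ)⁻¹ = (a*a)⁻¹ by rw [ha2]]
    field_simp
    linear_combination α * ha2 - hc2
  have hmr : mrpow ((t * t) • (P * P)) (1/2) = t • P := by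
    have hPP : ((t * t) • (P * P)).PosDef := by
      have h2 : P * P = Pᴴ * 1 * P := by rw [Matrix.mul_one, hPpd.1.eq]
      rw [h2]
      exact posDef_smul (posDef_conj Matrix.PosDef.one hPpd.isUnit) (mul_pos htpos htpos)
    have := msqrt_eq hPP (posDef_smul hPpd htpos).posSemidef (by rw [smul_mul_smul_comm])
    exact this
  rw [interp, hinner, hmr, hsqA]
  congr 1
  rw [smul_mul_smul_comm, smul_mul_smul_comm, hPdef]
  have hmat : S * (S⁻¹ * K * S⁻¹) * S = K := by
    calc S * (S⁻¹ * K * S⁻¹) * S = (S * S⁻¹) * K * (S⁻¹ * S) := by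
          simp only [Matrix.mul_assoc]
        _ = K := by rw [hinvS, hinvS', Matrix.one_mul, Matrix.mul_one]
  rw [hmat]
  congr 1
  have hane : a ≠ 0 := hapos.ne'
  rw [htdef, show (β:ℝ)⁻¹ = (a*a)⁻¹ by rw [ha2]]
  field_simp
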